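/- Let K = ℚ(m) be the field of rational functions in one variable m over ℚ, and let W be the Weierstrass curve over the polynomial ring K[t] given by y² = x³ + (t² + m·t + 3)x² + (2t + 3)x + 1 (i.e. a₁ = 0, a₂ = t² + m·t + 3, a₃ = 0, a₄ = 2t + 3, a₆ = 1). Then there exists a nonzero constant c ∈ K such that the discriminant of W, as a polynomial in t, satisfies Δ = c · t² · (4(m−3)t³ + (8m² − 24m + 3)t² + (4m³ − 12m² + 30m − 76)t + 27m² − 108m + 108), and moreover t divides the invariant c₄ of W in K[t]. -/

import Mathlib

open Polynomial

instance : CharZero (RatFunc ℚ) :=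
  charZero_of_injective_algebraMap (RatFunc.algebraMap_injective ℚ)

/-- The family of rational elliptic surfaces with configuration [1,1,1,7,II]:
`y² = x³ + (t² + m·t + 3)x² + (2t + 3)x + 1` over `ℚ(m)[t]`.  Its discriminant is, up to a
nonzero constant, `t²` times the displayed cubic in `t`, and `t` divides `c₄`. -/
theorem stmt_0 :
    let K := RatFunc ℚ
    let m : Polynomial K := Polynomial.C RatFunc.X
    let t : Polynomial K := Polynomial.X
    let W : WeierstrassCurve (Polynomial K) :=
      { a₁ := 0
        a₂ := t ^ 2 + m * t + 3
        a₃ := 0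
        a₄ := 2 * t + 3
        a₆ := 1 }
    (∃ c : K, c ≠ 0 ∧
      W.Δ = Polynomial.C c * t ^ 2 *
        (4 * (m - 3) * t ^ 3 + (8 * m ^ 2 - 24 * m + 3) * t ^ 2 +
          (4 * m ^ 3 - 12 * m ^ 2 + 30 * m - 76) * t + (27 * m ^ 2 - 108 * m + 108))) ∧
    t ∣ W.c₄ := by
  intro K m t W
  constructor
  · refine ⟨-16, by norm_num, ?_⟩
    show W.Δ = _
    simp only [WeierstrassCurve.Δ, WeierstrassCurve.b₂, WeierstrassCurve.b₄,
      WeierstrassCurve.b₆, WeierstrassCurve.b₈, W, m, t, map_neg, map_ofNat, Polynomial.C_neg, Polynomial.C_ofNat]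
    ring
  · refine ⟨16 * t ^ 3 + 32 * m * t ^ 2 + (16 * m ^ 2 + 96) * t + (96 * m - 96), ?_⟩
    show W.c₄ = _
    simp only [WeierstrassCurve.c₄, WeierstrassCurve.b₂, WeierstrassCurve.b₄, W, m, t]
    ring
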